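/- arXiv:2112.09625 — 4 statements merged into one kernel-verified Lean document; each statement's English description precedes it below -/
import Mathlib

section
/- Let α be a finite type and let P, Q be distributions on α. Define ψ_P : α → ℝ by ψ_P x = √(P x) and ψ_Q x = √(Q x), and define v : α × α → ℝ by v (x, y) = ψ_P x * ψ_Q y + ψ_Q x * ψ_P y. Then (1/4) * ∑ (x,y), (v (x,y))² = (1/2) * (1 + (1 − d_H(P,Q)²)²). (This is Corollary 4.2: the probability that the comparison circuit outputs 1 on the purifications of P and Q equals (1/2)(1 + (1 − d_H²(P,Q))²).) -/
/-- The Hellinger distance between two distributions on a finite type: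
`d_H(P,Q) = (1/√2)·√(∑ x, (√(P x) − √(Q x))²)`. -/
noncomputable def hellingerDist {α : Type*} [Fintype α] (P Q : α → ℝ) : ℝ :=
  (1 / Real.sqrt 2) * Real.sqrt (∑ x, (Real.sqrt (P x) - Real.sqrt (Q x)) ^ 2)

/-- Corollary 4.2: with `ψ_P x = √(P x)`, `ψ_Q x = √(Q x)` and
`v (x,y) = ψ_P x · ψ_Q y + ψ_Q x · ψ_P y`, the probability that the comparison
circuit outputs 1 on the purifications of `P` and `Q` equals
`(1/4)·∑ (x,y), v(x,y)² = (1/2)·(1 + (1 − d_H(P,Q)²)²)`. -/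
theorem comparison_circuit_output_probability {α : Type*} [Fintype α]
    (P Q : α → ℝ)
    (hP0 : ∀ x, 0 ≤ P x) (hQ0 : ∀ x, 0 ≤ Q x)
    (hP1 : ∑ x, P x = 1) (hQ1 : ∑ x, Q x = 1)
    (ψP ψQ : α → ℝ) (hψP : ∀ x, ψP x = Real.sqrt (P x))
    (hψQ : ∀ x, ψQ x = Real.sqrt (Q x))
    (v : α × α → ℝ) (hv : ∀ x y : α, v (x, y) = ψP x * ψQ y + ψQ x * ψP y) :
    (1 / 4 : ℝ) * ∑ p : α × α, v p ^ 2 =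
      (1 / 2) * (1 + (1 - hellingerDist P Q ^ 2) ^ 2) := by
  set a : α → ℝ := fun x => Real.sqrt (P x) with ha
  set b : α → ℝ := fun x => Real.sqrt (Q x) with hb
  have ha2 : ∑ x, a x ^ 2 = 1 := by
    simp only [ha]
    rw [← hP1]
    exact Finset.sum_congr rfl fun x _ => Real.sq_sqrt (hP0 x)
  have hb2 : ∑ x, b x ^ 2 = 1 := by
    simp only [hb]
    rw [← hQ1]
    exact Finset.sum_congr rfl fun x _ => Real.sq_sqrt (hQ0 x)
  set F : ℝ := ∑ x, a x * b x with hF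
  -- Hellinger part
  have hS : ∑ x, (a x - b x) ^ 2 = 2 - 2 * F := by
    have : ∀ x : α, (a x - b x) ^ 2 = a x ^ 2 + b x ^ 2 - 2 * (a x * b x) := by
      intro x; ring
    rw [Finset.sum_congr rfl fun x _ => this x, Finset.sum_sub_distrib,
      Finset.sum_add_distrib, ha2, hb2, ← Finset.mul_sum, ← hF]
    ring
  have hSnn : (0:ℝ) ≤ ∑ x, (a x - b x) ^ 2 :=
    Finset.sum_nonneg fun x _ => sq_nonneg _
  have hD : hellingerDist P Q ^ 2 = 1 - F := by
    rw [hellingerDist, mul_pow, Real.sq_sqrt hSnn, div_pow, one_pow,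
      Real.sq_sqrt (by norm_num : (0:ℝ) ≤ 2), hS]
    ring
  -- main sum
  have key : ∀ x : α, ∑ y, v (x, y) ^ 2 =
      a x ^ 2 * (∑ y, b y ^ 2) + 2 * (a x * b x) * F + b x ^ 2 * (∑ y, a y ^ 2) := by
    intro x
    rw [hF, Finset.mul_sum, Finset.mul_sum, Finset.mul_sum, ← Finset.sum_add_distrib,
      ← Finset.sum_add_distrib]
    refine Finset.sum_congr rfl fun y _ => ?_
    rw [hv, hψP, hψQ, hψP, hψQ]
    simp only [ha, hb]
    ring
  have hmain : ∑ p : α × α, v p ^ 2 = 2 + 2 * F ^ 2 := by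
    rw [Fintype.sum_prod_type]
    rw [Finset.sum_congr rfl fun x _ => key x]
    rw [Finset.sum_add_distrib, Finset.sum_add_distrib, ha2, hb2]
    simp only [mul_one]
    rw [ha2, hb2]
    have : ∑ x, 2 * (a x * b x) * F = 2 * F ^ 2 := by
      rw [← Finset.sum_mul, ← Finset.mul_sum, ← hF]; ring
    rw [this]; ring
  rw [hmain, hD]; ring
end

section
/- Let α be a finite type, let η ∈ (0, 1], let k be a positive natural number, let Q, P₁, …, P_k be distributions on α, and let q₁, …, q_k ∈ [0, 1] with ∑ i, q i = 1. Let f : ℝ → ℝ be f(x) = (1/2)·(1 + (1 − x²)²). If ∑ i, q i * f (d_H(Q, P i)) ≥ 1 − 50·η², then d_H(∑ i, q i • P i, Q) ≤ 12 * η^(1/4), where (∑ i, q i • P i) is the distribution x ↦ ∑ i, q i * P i x. (Lemma 4.6.) -/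
lemma hellinger_sq_eq {α : Type*} [Fintype α] (P Q : α → ℝ)
    (hP0 : ∀ x, 0 ≤ P x) (hQ0 : ∀ x, 0 ≤ Q x)
    (hP1 : ∑ x, P x = 1) (hQ1 : ∑ x, Q x = 1) :
    hellingerDist P Q ^ 2 = 1 - ∑ x, Real.sqrt (P x) * Real.sqrt (Q x) := by
  have h1 : (0:ℝ) ≤ ∑ x, (Real.sqrt (P x) - Real.sqrt (Q x)) ^ 2 :=
    Finset.sum_nonneg fun x _ => sq_nonneg _
  have h2 : ∀ x : α, (Real.sqrt (P x) - Real.sqrt (Q x)) ^ 2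
      = P x + Q x - 2 * (Real.sqrt (P x) * Real.sqrt (Q x)) := by
    intro x
    have := Real.sq_sqrt (hP0 x)
    have := Real.sq_sqrt (hQ0 x)
    nlinarith [sq_nonneg (Real.sqrt (P x) - Real.sqrt (Q x))]
  rw [hellingerDist, mul_pow, div_pow, one_pow, Real.sq_sqrt (by norm_num : (0:ℝ) ≤ 2),
    Real.sq_sqrt h1, Finset.sum_congr rfl (fun x _ => h2 x)]
  rw [Finset.sum_sub_distrib, Finset.sum_add_distrib, hP1, hQ1, ← Finset.mul_sum]
  ring

lemma hellinger_nonneg {α : Type*} [Fintype α] (P Q : α → ℝ) :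
    0 ≤ hellingerDist P Q := by
  unfold hellingerDist; positivity

/-- Lemma 4.6: if `Q, P₁, …, P_k` are distributions, `q` is a probability
vector, `f(x) = (1/2)(1 + (1 − x²)²)` and
`∑ i, q i · f(d_H(Q, P i)) ≥ 1 − 50η²`, then the mixture `∑ i, q i • P i` is
`12·η^(1/4)`-close to `Q` in Hellinger distance. -/
theorem hellinger_mixture_close (η : ℝ) (hη : η ∈ Set.Ioc (0 : ℝ) 1)
    {α : Type*} [Fintype α] (k : ℕ) (hk : 0 < k)
    (Q : α → ℝ) (P : Fin k → α → ℝ) (q : Fin k → ℝ)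
    (hQ0 : ∀ x, 0 ≤ Q x) (hQ1 : ∑ x, Q x = 1)
    (hP0 : ∀ i x, 0 ≤ P i x) (hP1 : ∀ i, ∑ x, P i x = 1)
    (hq : ∀ i, q i ∈ Set.Icc (0 : ℝ) 1) (hq1 : ∑ i, q i = 1)
    (h : ∑ i, q i * ((1 / 2) * (1 + (1 - hellingerDist Q (P i) ^ 2) ^ 2)) ≥
      1 - 50 * η ^ 2) :
    hellingerDist (fun x => ∑ i, q i * P i x) Q ≤ 12 * η ^ ((1 : ℝ) / 4) := by
  obtain ⟨hη0, hη1⟩ := hη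
  set M : α → ℝ := fun x => ∑ i, q i * P i x with hM
  have hq0 : ∀ i, 0 ≤ q i := fun i => (hq i).1
  have hM0 : ∀ x, 0 ≤ M x := fun x =>
    Finset.sum_nonneg fun i _ => mul_nonneg (hq0 i) (hP0 i x)
  have hM1 : ∑ x, M x = 1 := by
    rw [hM]
    rw [Finset.sum_comm]
    simp_rw [← Finset.mul_sum]
    simp_rw [hP1]
    simpa using hq1
  -- h_i² ∈ [0,1]
  have hsq : ∀ i, hellingerDist Q (P i) ^ 2
      = 1 - ∑ x, Real.sqrt (Q x) * Real.sqrt (P i x) :=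
    fun i => hellinger_sq_eq Q (P i) hQ0 (hP0 i) hQ1 (hP1 i)
  have hle1 : ∀ i, hellingerDist Q (P i) ^ 2 ≤ 1 := by
    intro i
    rw [hsq i]
    have : (0:ℝ) ≤ ∑ x, Real.sqrt (Q x) * Real.sqrt (P i x) :=
      Finset.sum_nonneg fun x _ => mul_nonneg (Real.sqrt_nonneg _) (Real.sqrt_nonneg _)
    linarith
  -- Step 1: ∑ q_i h_i² ≤ 100 η²
  have key1 : ∑ i, q i * hellingerDist Q (P i) ^ 2 ≤ 100 * η ^ 2 := by
    have hpt : ∀ i, q i * hellingerDist Q (P i) ^ 2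
        ≤ q i * (2 * (1 - (1 / 2) * (1 + (1 - hellingerDist Q (P i) ^ 2) ^ 2))) := by
      intro i
      apply mul_le_mul_of_nonneg_left _ (hq0 i)
      set t := hellingerDist Q (P i) ^ 2
      have ht0 : 0 ≤ t := sq_nonneg _
      have ht1 : t ≤ 1 := hle1 i
      nlinarith
    calc ∑ i, q i * hellingerDist Q (P i) ^ 2
        ≤ ∑ i, q i * (2 * (1 - (1 / 2) * (1 + (1 - hellingerDist Q (P i) ^ 2) ^ 2))) :=
          Finset.sum_le_sum fun i _ => hpt i
      _ = 2 * (∑ i, q i) - 2 * ∑ i, q i * ((1 / 2) * (1 + (1 - hellingerDist Q (P i) ^ 2) ^ 2)) := by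
          rw [Finset.mul_sum, Finset.mul_sum, ← Finset.sum_sub_distrib]
          exact Finset.sum_congr rfl fun i _ => by ring
      _ ≤ 100 * η ^ 2 := by rw [hq1]; linarith
  -- Step 2: pointwise concavity via Cauchy-Schwarz
  have hconc : ∀ x, ∑ i, q i * Real.sqrt (P i x) ≤ Real.sqrt (M x) := by
    intro x
    have hcs : (∑ i, q i * Real.sqrt (P i x)) ^ 2 ≤ M x := by
      calc (∑ i, q i * Real.sqrt (P i x)) ^ 2
          ≤ (∑ i, q i) * ∑ i, q i * P i x := by
            apply Finset.sum_sq_le_sum_mul_sum_of_sq_eq_mul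
            · exact fun i _ => hq0 i
            · exact fun i _ => mul_nonneg (hq0 i) (hP0 i x)
            · intro i _
              rw [mul_pow, Real.sq_sqrt (hP0 i x)]
              ring
        _ = M x := by rw [hq1, one_mul]
    calc ∑ i, q i * Real.sqrt (P i x)
        = Real.sqrt ((∑ i, q i * Real.sqrt (P i x)) ^ 2) :=
          (Real.sqrt_sq (Finset.sum_nonneg fun i _ =>
            mul_nonneg (hq0 i) (Real.sqrt_nonneg _))).symm
      _ ≤ Real.sqrt (M x) := Real.sqrt_le_sqrt hcs
  -- Step 3: d_H(M,Q)² ≤ ∑ q_i h_i²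
  have key2 : hellingerDist M Q ^ 2 ≤ ∑ i, q i * hellingerDist Q (P i) ^ 2 := by
    rw [hellinger_sq_eq M Q hM0 hQ0 hM1 hQ1]
    have : ∑ i, q i * (1 - hellingerDist Q (P i) ^ 2) ≤ ∑ x, Real.sqrt (M x) * Real.sqrt (Q x) := by
      calc ∑ i, q i * (1 - hellingerDist Q (P i) ^ 2)
          = ∑ i, q i * ∑ x, Real.sqrt (Q x) * Real.sqrt (P i x) := by
            refine Finset.sum_congr rfl fun i _ => by rw [hsq i]; ring
        _ = ∑ x, (∑ i, q i * Real.sqrt (P i x)) * Real.sqrt (Q x) := by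
            simp_rw [Finset.mul_sum, Finset.sum_mul]
            rw [Finset.sum_comm]
            apply Finset.sum_congr rfl
            intro x _
            apply Finset.sum_congr rfl
            intro i _
            ring
        _ ≤ ∑ x, Real.sqrt (M x) * Real.sqrt (Q x) :=
            Finset.sum_le_sum fun x _ =>
              mul_le_mul_of_nonneg_right (hconc x) (Real.sqrt_nonneg _)
    have expand : ∑ i, q i * (1 - hellingerDist Q (P i) ^ 2)
        = 1 - ∑ i, q i * hellingerDist Q (P i) ^ 2 := by
      simp_rw [mul_sub, Finset.sum_sub_distrib, mul_one, hq1]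
    linarith [expand ▸ this]
  -- Conclusion
  have hfinal : hellingerDist M Q ^ 2 ≤ (10 * η) ^ 2 := by nlinarith
  have h10 : hellingerDist M Q ≤ 10 * η := by
    have := hellinger_nonneg M Q
    nlinarith
  have hrpow : η ≤ η ^ ((1 : ℝ) / 4) := by
    nth_rewrite 1 [show η = η ^ ((1:ℝ)) by rw [Real.rpow_one]]
    exact Real.rpow_le_rpow_of_exponent_ge hη0 hη1 (by norm_num)
  have : (0:ℝ) ≤ η ^ ((1:ℝ)/4) := Real.rpow_nonneg hη0.le _
  calc hellingerDist M Q ≤ 10 * η := h10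
    _ ≤ 10 * η ^ ((1:ℝ)/4) := by linarith
    _ ≤ 12 * η ^ ((1:ℝ)/4) := by linarith
end

section
/- Let α be a finite type, let P, Q be distributions on α, let η ∈ (0, 1] with 6·η² ≤ 1, and let q = (1/2)·(1 + (1 − d_H(P,Q)²)²). Let N be a natural number with 2 * Real.exp (−η^4 * N / 2) < 2/3, and let μ be the product measure on Fin N → Bool of N copies of the Bernoulli measure on Bool with probability q of true. If μ {ω | ((Finset.univ.filter (fun i => ω i = true)).card : ℝ) / N ≥ 1 − 2·η²} ≥ 2/3, then d_H(P, Q) ≤ 3·η. (Probabilistic core of the soundness of Theorem 4.4: if a prover who sends the pure state purifying P in every round passes the verifier's acceptance test, with threshold 1 − 2η² on the empirical mean of the swap-test outcomes, with probability at least 2/3, then the distribution P is O(η)-close to 𝒟_C in Hellinger distance.) -/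
open MeasureTheory

/-- The Bernoulli measure on `Bool` with probability `p` of `true`. -/
noncomputable def bernoulliMeasure (p : ℝ) : Measure Bool :=
  ENNReal.ofReal p • Measure.dirac true + ENNReal.ofReal (1 - p) • Measure.dirac false

instance (p : ℝ) : IsFiniteMeasure (bernoulliMeasure p) := by
  constructor
  simp only [bernoulliMeasure, Measure.add_apply, Measure.smul_apply, smul_eq_mul,
    measure_univ, mul_one]
  exact ENNReal.add_lt_top.mpr ⟨ENNReal.ofReal_lt_top, ENNReal.ofReal_lt_top⟩

lemma bernoulli_prob (q : ℝ) (hq0 : 0 ≤ q) (hq1 : q ≤ 1) :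
    IsProbabilityMeasure (bernoulliMeasure q) := by
  constructor
  simp only [bernoulliMeasure, Measure.add_apply, Measure.smul_apply, smul_eq_mul,
    measure_univ, mul_one]
  rw [← ENNReal.ofReal_add hq0 (by linarith)]
  norm_num

lemma bernoulli_integral (q : ℝ) (hq0 : 0 ≤ q) (hq1 : q ≤ 1) (g : Bool → ℝ) :
    ∫ b, g b ∂(bernoulliMeasure q) = q * g true + (1 - q) * g false := by
  haveI h1 : IsFiniteMeasure (ENNReal.ofReal q • Measure.dirac (true : Bool)) := by
    constructor
    simp [lt_top_iff_ne_top, ENNReal.ofReal_ne_top]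
  haveI h2 : IsFiniteMeasure (ENNReal.ofReal (1 - q) • Measure.dirac (false : Bool)) := by
    constructor
    simp [lt_top_iff_ne_top, ENNReal.ofReal_ne_top]
  rw [bernoulliMeasure, integral_add_measure Integrable.of_finite Integrable.of_finite,
    integral_smul_measure, integral_smul_measure, integral_dirac, integral_dirac,
    ENNReal.toReal_ofReal hq0, ENNReal.toReal_ofReal (by linarith : (0:ℝ) ≤ 1 - q)]
  simp [smul_eq_mul]

lemma integral_eval_pair {N : ℕ} (μb : Measure Bool) [IsProbabilityMeasure μb]
    (g : Bool → ℝ) (i j : Fin N) :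
    ∫ ω, g (ω i) * g (ω j) ∂(Measure.pi fun _ : Fin N => μb) =
      if i = j then ∫ b, g b ^ 2 ∂μb else (∫ b, g b ∂μb) * ∫ b, g b ∂μb := by
  classical
  letI : MeasureSpace Bool := ⟨μb⟩
  have hμb : μb = (volume : Measure Bool) := rfl
  haveI : IsProbabilityMeasure (volume : Measure Bool) :=
    hμb ▸ (inferInstance : IsProbabilityMeasure μb)
  have hpi : (Measure.pi fun _ : Fin N => μb) = (volume : Measure (Fin N → Bool)) :=
    (volume_pi).symm
  have hone : ∫ _ : Bool, (1:ℝ) = 1 := by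
    rw [integral_const, probReal_univ]
    simp
  by_cases hij : i = j
  · subst hij
    simp only [if_pos rfl]
    set F : Fin N → Bool → ℝ := fun k b => if k = i then g b ^ 2 else 1 with hF
    have heq : ∀ ω : Fin N → Bool, g (ω i) * g (ω i) = ∏ k, F k (ω k) := by
      intro ω
      rw [Finset.prod_eq_single i (fun k _ hk => by simp [F, hk])
        (fun h => absurd (Finset.mem_univ i) h)]
      simp [F, sq]
    calc ∫ ω, g (ω i) * g (ω i) ∂(Measure.pi fun _ : Fin N => μb)
        = ∫ ω : Fin N → Bool, ∏ k, F k (ω k) := by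
          rw [hpi]; exact integral_congr_ae (Filter.Eventually.of_forall heq)
      _ = ∏ k, ∫ b, F k b := integral_fintype_prod_eq_prod F
      _ = ∫ b, g b ^ 2 ∂μb := by
          rw [Finset.prod_eq_single i (fun k _ hk => by simp only [F, if_neg hk]; exact hone)
            (fun h => absurd (Finset.mem_univ i) h), hμb]
          simp [F]
  · simp only [if_neg hij]
    set F : Fin N → Bool → ℝ := fun k b => if k = i then g b else if k = j then g b else 1
      with hF
    have heq : ∀ ω : Fin N → Bool, g (ω i) * g (ω j) = ∏ k, F k (ω k) := by
      intro ω
      have hsub : ∏ k ∈ ({i, j} : Finset (Fin N)), F k (ω k) = ∏ k, F k (ω k) :=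
        Finset.prod_subset (Finset.subset_univ _) (fun k _ hk => by
          simp only [Finset.mem_insert, Finset.mem_singleton, not_or] at hk
          simp [F, hk.1, hk.2])
      rw [← hsub, Finset.prod_pair hij]
      simp [F, hij, Ne.symm hij]
    calc ∫ ω, g (ω i) * g (ω j) ∂(Measure.pi fun _ : Fin N => μb)
        = ∫ ω : Fin N → Bool, ∏ k, F k (ω k) := by
          rw [hpi]; exact integral_congr_ae (Filter.Eventually.of_forall heq)
      _ = ∏ k, ∫ b, F k b := integral_fintype_prod_eq_prod F
      _ = (∫ b, g b ∂μb) * ∫ b, g b ∂μb := by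
          have hsub : ∏ k ∈ ({i, j} : Finset (Fin N)), (∫ b, F k b) = ∏ k, ∫ b, F k b :=
            Finset.prod_subset (Finset.subset_univ _) (fun k _ hk => by
              simp only [Finset.mem_insert, Finset.mem_singleton, not_or] at hk
              simp only [F, if_neg hk.1, if_neg hk.2]; exact hone)
          rw [← hsub, Finset.prod_pair hij, hμb]
          simp [F, hij, Ne.symm hij]

lemma final_arith (η Nr : ℝ) (hN1 : 1 ≤ Nr) (hNη : 2 ≤ η ^ 4 * Nr)
    (hfin : ((5 / 2) * η ^ 2 * Nr) ^ 2 * (2 / 3) ≤ Nr * (1 / 4)) : False := by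
  nlinarith [mul_le_mul_of_nonneg_right hNη (by linarith : (0:ℝ) ≤ Nr)]

lemma quarter_arith (q : ℝ) : q * (1 - q) ≤ 1 / 4 := by
  nlinarith [sq_nonneg (1 - 2 * q)]

/-- Probabilistic core of the soundness of Theorem 4.4: in each round the
verifier's swap-test outcome is Bernoulli with success probability
`q = (1/2)(1 + (1 − d_H(P,Q)²)²)`; if the verifier's acceptance test (empirical
mean at least `1 − 2η²`) passes with probability at least `2/3`, then
`d_H(P, Q) ≤ 3η`. -/
theorem soundness_probabilistic_core {α : Type*} [Fintype α]
    (P Q : α → ℝ)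
    (hP0 : ∀ x, 0 ≤ P x) (hQ0 : ∀ x, 0 ≤ Q x)
    (hP1 : ∑ x, P x = 1) (hQ1 : ∑ x, Q x = 1)
    (η : ℝ) (hη : η ∈ Set.Ioc (0 : ℝ) 1) (hη2 : 6 * η ^ 2 ≤ 1)
    (q : ℝ) (hq : q = (1 / 2) * (1 + (1 - hellingerDist P Q ^ 2) ^ 2))
    (N : ℕ) (hN : 2 * Real.exp (-η ^ 4 * N / 2) < 2 / 3)
    (h : (Measure.pi fun _ : Fin N => bernoulliMeasure q)
        {ω | ((Finset.univ.filter fun i => ω i = true).card : ℝ) / N ≥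
          1 - 2 * η ^ 2} ≥ 2 / 3) :
    hellingerDist P Q ≤ 3 * η := by
  classical
  obtain ⟨hη0, hη1⟩ := hη
  by_contra hcon
  push_neg at hcon
  -- Hellinger distance bounds
  have hS0 : 0 ≤ ∑ x, (Real.sqrt (P x) - Real.sqrt (Q x)) ^ 2 :=
    Finset.sum_nonneg fun x _ => sq_nonneg _
  have hS2 : ∑ x, (Real.sqrt (P x) - Real.sqrt (Q x)) ^ 2 ≤ 2 := by
    have hx : ∀ x ∈ Finset.univ, (Real.sqrt (P x) - Real.sqrt (Q x)) ^ 2 ≤ P x + Q x := by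
      intro x _
      have h1 : Real.sqrt (P x) ^ 2 = P x := Real.sq_sqrt (hP0 x)
      have h2 : Real.sqrt (Q x) ^ 2 = Q x := Real.sq_sqrt (hQ0 x)
      nlinarith [Real.sqrt_nonneg (P x), Real.sqrt_nonneg (Q x)]
    calc ∑ x, (Real.sqrt (P x) - Real.sqrt (Q x)) ^ 2 ≤ ∑ x, (P x + Q x) :=
        Finset.sum_le_sum hx
      _ = 2 := by rw [Finset.sum_add_distrib, hP1, hQ1]; norm_num
  have hdsq : hellingerDist P Q ^ 2 = (1 / 2) * ∑ x, (Real.sqrt (P x) - Real.sqrt (Q x)) ^ 2 := by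
    rw [hellingerDist, mul_pow, Real.sq_sqrt hS0, div_pow, one_pow,
      Real.sq_sqrt (by norm_num : (0:ℝ) ≤ 2)]
  have hd0 : 0 ≤ hellingerDist P Q :=
    mul_nonneg (by positivity) (Real.sqrt_nonneg _)
  set d := hellingerDist P Q with hddef
  have hd1 : d ^ 2 ≤ 1 := by rw [hdsq]; linarith
  have hd9 : 9 * η ^ 2 < d ^ 2 := by nlinarith
  have hq0 : 0 ≤ q := by nlinarith [sq_nonneg (1 - d ^ 2)]
  have hq1 : q ≤ 1 := by nlinarith
  have hqle : q ≤ 1 - (9 / 2) * η ^ 2 := by nlinarith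
  -- bounds on N
  have hN0 : 0 < N := by
    rcases Nat.eq_zero_or_pos N with h0 | h0
    · subst h0; norm_num [Real.exp_zero] at hN
    · exact h0
  have hNpos : (0:ℝ) < N := by exact_mod_cast hN0
  have hNr : (1:ℝ) ≤ N := by exact_mod_cast hN0
  have hNη : 2 ≤ η ^ 4 * N := by
    by_contra h'
    push_neg at h'
    have h1 : Real.exp (-1) ≤ Real.exp (-η ^ 4 * N / 2) := Real.exp_le_exp.mpr (by nlinarith)
    have h2 : Real.exp 1 < 3 := by
      have := Real.exp_one_lt_d9; linarith
    have h3 : (1:ℝ) / 3 < Real.exp (-1) := by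
      rw [Real.exp_neg, ← one_div]
      exact one_div_lt_one_div_of_lt (Real.exp_pos 1) h2
    linarith
  -- set up the probability space
  haveI hprobb : IsProbabilityMeasure (bernoulliMeasure q) := bernoulli_prob q hq0 hq1
  set μpi := Measure.pi fun _ : Fin N => bernoulliMeasure q with hμpi
  haveI : IsProbabilityMeasure μpi := by rw [hμpi]; infer_instance
  set g0 : Bool → ℝ := fun b => (if b = true then (1:ℝ) else 0) - q with hg0
  have hint0 : ∫ b, g0 b ∂(bernoulliMeasure q) = 0 := by
    rw [bernoulli_integral q hq0 hq1]
    simp [g0]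
    ring
  have hint2 : ∫ b, g0 b ^ 2 ∂(bernoulliMeasure q) = q * (1 - q) := by
    rw [bernoulli_integral q hq0 hq1]
    simp [g0]
    ring
  set F : (Fin N → Bool) → ℝ := fun ω => (∑ i, g0 (ω i)) ^ 2 with hFdef
  have hvar : ∫ ω, F ω ∂μpi = N * (q * (1 - q)) := by
    have hexp : ∀ ω : Fin N → Bool, F ω = ∑ i, ∑ j, g0 (ω i) * g0 (ω j) := by
      intro ω
      simp only [F, sq]
      rw [Finset.sum_mul_sum]
    calc ∫ ω, F ω ∂μpi = ∫ ω, ∑ i, ∑ j, g0 (ω i) * g0 (ω j) ∂μpi :=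
          integral_congr_ae (Filter.Eventually.of_forall hexp)
      _ = ∑ i, ∑ j, ∫ ω, g0 (ω i) * g0 (ω j) ∂μpi := by
          rw [integral_finset_sum _ fun i _ => Integrable.of_finite]
          exact Finset.sum_congr rfl fun i _ =>
            integral_finset_sum _ fun j _ => Integrable.of_finite
      _ = ∑ i : Fin N, ∑ j : Fin N, (if i = j then q * (1 - q) else 0) := by
          refine Finset.sum_congr rfl fun i _ => Finset.sum_congr rfl fun j _ => ?_
          rw [hμpi, integral_eval_pair (bernoulliMeasure q) g0 i j]
          by_cases hij : i = j
          · simp [hij, hint2]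
          · simp [hij, hint0]
      _ = N * (q * (1 - q)) := by
          simp [Finset.sum_ite_eq, Finset.card_univ]
  -- Markov / Chebyshev step
  set t := (5 / 2) * η ^ 2 * (N : ℝ) with ht
  have ht0 : 0 < t := by positivity
  have hsubset : {ω : Fin N → Bool |
        ((Finset.univ.filter fun i => ω i = true).card : ℝ) / N ≥ 1 - 2 * η ^ 2}
      ⊆ {ω | t ^ 2 ≤ F ω} := by
    intro ω hω
    simp only [Set.mem_setOf_eq] at hω ⊢
    rw [ge_iff_le, le_div_iff₀ hNpos] at hω
    have hsum : ∑ i, g0 (ω i) =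
        ((Finset.univ.filter fun i => ω i = true).card : ℝ) - N * q := by
      simp [g0, Finset.sum_sub_distrib, Finset.sum_boole, Finset.card_univ, mul_comm]
    have hdev : t ≤ ∑ i, g0 (ω i) := by
      rw [hsum, ht]
      have hq' : (N:ℝ) * q ≤ N * (1 - (9 / 2) * η ^ 2) :=
        mul_le_mul_of_nonneg_left hqle hNpos.le
      linarith
    exact pow_le_pow_left₀ ht0.le hdev 2
  have hmarkov := mul_meas_ge_le_integral_of_nonneg (μ := μpi) (f := F)
    (Filter.Eventually.of_forall fun ω => sq_nonneg _) Integrable.of_finite (t ^ 2)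
  have hA : (2 / 3 : ℝ) ≤ (μpi {ω | t ^ 2 ≤ F ω}).toReal := by
    have h1 : (2 / 3 : ENNReal) ≤ μpi {ω | t ^ 2 ≤ F ω} :=
      le_trans h (measure_mono hsubset)
    have h2 := ENNReal.toReal_mono (measure_ne_top μpi _) h1
    rw [ENNReal.toReal_div] at h2
    norm_num at h2
    exact h2
  have hfin : t ^ 2 * (2 / 3) ≤ (N : ℝ) * (1 / 4) := by
    calc t ^ 2 * (2 / 3) ≤ t ^ 2 * (μpi {ω | t ^ 2 ≤ F ω}).toReal :=
          mul_le_mul_of_nonneg_left hA (sq_nonneg t)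
      _ ≤ ∫ ω, F ω ∂μpi := hmarkov
      _ = N * (q * (1 - q)) := hvar
      _ ≤ N * (1 / 4) := mul_le_mul_of_nonneg_left (quarter_arith q) hNpos.le
  rw [ht] at hfin
  exact final_arith η N hNr hNη hfin
end

section
/- Let α be a finite type, let D, D_C be distributions on α with d_H(D, D_C) ≤ η for some η ∈ (0, 1], let δ ∈ (0, 1), and let q = (1/2)·(1 + (1 − d_H(D, D_C)²)²). Let N be a natural number with (N : ℝ) ≥ (2 / η^4) * Real.log (2 / δ), and let μ be the product measure on Fin N → Bool of N copies of the Bernoulli measure on Bool with probability q of true. Then μ {ω | ((Finset.univ.filter (fun i => ω i = true)).card : ℝ) / N ≥ 1 − 2·η²} ≥ 1 − δ. (Probabilistic core of the completeness of Theorem 4.4: the honest prover, who forwards the state purifying D with d_H(D, D_C) ≤ η, passes the verifier's acceptance test with probability at least 1 − δ.) -/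
open MeasureTheory
open scoped ENNReal

lemma exp_neg_le_quad {t : ℝ} (ht : 0 ≤ t) : Real.exp (-t) ≤ 1 - t + t ^ 2 / 2 := by
  have h1 : 1 + t + t ^ 2 / 2 ≤ Real.exp t := by
    have := Real.sum_le_exp_of_nonneg ht 3
    simp [Finset.sum_range_succ, Nat.factorial] at this
    nlinarith [this]
  have h3 : 0 < 1 - t + t ^ 2 / 2 := by nlinarith [sq_nonneg (t - 1)]
  have h4 : Real.exp (-t) * Real.exp t = 1 := by rw [← Real.exp_add]; simp
  nlinarith [Real.exp_pos t, mul_le_mul_of_nonneg_left h1 h3.le]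

lemma exponent_ineq {t q : ℝ} (ht0 : 0 < t) (ht1 : t ≤ 1) (hq1 : q ≤ 1)
    (hql : 1 - t + t ^ 2 / 2 ≤ q) :
    -(q * (t - t ^ 2 / 2)) + t * (1 - 2 * t) ≤ -(t ^ 2) / 2 := by
  have hs : 0 ≤ t - t ^ 2 / 2 := by nlinarith
  nlinarith [mul_nonneg (sub_nonneg.2 hql) hs,
    mul_le_mul_of_nonneg_left ht1 (pow_nonneg ht0.le 3)]

lemma per_trial {t q : ℝ} (ht0 : 0 < t) (ht1 : t ≤ 1) (hq0 : 0 ≤ q) (hq1 : q ≤ 1)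
    (hql : 1 - t + t ^ 2 / 2 ≤ q) :
    (q * Real.exp (-t) + (1 - q)) * Real.exp (t * (1 - 2 * t))
      ≤ Real.exp (-(t ^ 2) / 2) := by
  have he : Real.exp (-t) ≤ 1 - t + t ^ 2 / 2 := exp_neg_le_quad ht0.le
  have hA2 : q * Real.exp (-t) + (1 - q) ≤ Real.exp (-(q * (t - t ^ 2 / 2))) := by
    have h1 : q * Real.exp (-t) + (1 - q) ≤ -(q * (t - t ^ 2 / 2)) + 1 := by nlinarith
    linarith [Real.add_one_le_exp (-(q * (t - t ^ 2 / 2)))]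
  calc (q * Real.exp (-t) + (1 - q)) * Real.exp (t * (1 - 2 * t))
      ≤ Real.exp (-(q * (t - t ^ 2 / 2))) * Real.exp (t * (1 - 2 * t)) :=
        mul_le_mul_of_nonneg_right hA2 (Real.exp_pos _).le
    _ = Real.exp (-(q * (t - t ^ 2 / 2)) + t * (1 - 2 * t)) := (Real.exp_add _ _).symm
    _ ≤ Real.exp (-(t ^ 2) / 2) := Real.exp_le_exp.2 (exponent_ineq ht0 ht1 hq1 hql)

lemma real_core {η δ q : ℝ} (hη0 : 0 < η) (hη1 : η ≤ 1) (hδ0 : 0 < δ) (hδ1 : δ < 1)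
    (hq0 : 0 ≤ q) (hq1 : q ≤ 1) (hqlb : 1 - η ^ 2 + η ^ 4 / 2 ≤ q) (N : ℕ)
    (hN : (N : ℝ) ≥ (2 / η ^ 4) * Real.log (2 / δ)) :
    (q * Real.exp (-(η ^ 2)) + (1 - q)) ^ N
      * Real.exp (η ^ 2 * (1 - 2 * η ^ 2) * N) ≤ δ := by
  set t : ℝ := η ^ 2 with htdef
  have ht0 : 0 < t := by positivity
  have ht1 : t ≤ 1 := by nlinarith
  have hql : 1 - t + t ^ 2 / 2 ≤ q := by rw [htdef]; nlinarith
  have hA0 : 0 ≤ q * Real.exp (-t) + (1 - q) :=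
    add_nonneg (mul_nonneg hq0 (Real.exp_pos _).le) (by linarith)
  have h1 : (q * Real.exp (-t) + (1 - q)) ^ N * Real.exp (t * (1 - 2 * t) * N)
      = ((q * Real.exp (-t) + (1 - q)) * Real.exp (t * (1 - 2 * t))) ^ N := by
    rw [mul_pow, ← Real.exp_nat_mul]
    ring_nf
  have h2 : ((q * Real.exp (-t) + (1 - q)) * Real.exp (t * (1 - 2 * t))) ^ N
      ≤ Real.exp (-(t ^ 2) / 2) ^ N :=
    pow_le_pow_left₀ (mul_nonneg hA0 (Real.exp_pos _).le)
      (per_trial ht0 ht1 hq0 hq1 hql) N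
  have h3 : Real.exp (-(t ^ 2) / 2) ^ N = Real.exp (-(t ^ 2) / 2 * N) := by
    rw [← Real.exp_nat_mul]; ring_nf
  have h4 : Real.exp (-(t ^ 2) / 2 * N) ≤ δ / 2 := by
    have hη4 : (0 : ℝ) < η ^ 4 := by positivity
    have hle : Real.log (2 / δ) ≤ t ^ 2 * N / 2 := by
      rw [ge_iff_le, div_mul_eq_mul_div, div_le_iff₀ hη4] at hN
      rw [htdef]
      nlinarith
    have h5 : Real.exp (-(t ^ 2) / 2 * N) ≤ Real.exp (-Real.log (2 / δ)) :=
      Real.exp_le_exp.2 (by linarith)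
    rw [Real.exp_neg, Real.exp_log (by positivity)] at h5
    calc Real.exp (-(t ^ 2) / 2 * N) ≤ (2 / δ)⁻¹ := h5
      _ = δ / 2 := by field_simp
  calc (q * Real.exp (-t) + (1 - q)) ^ N * Real.exp (t * (1 - 2 * t) * N)
      = ((q * Real.exp (-t) + (1 - q)) * Real.exp (t * (1 - 2 * t))) ^ N := h1
    _ ≤ Real.exp (-(t ^ 2) / 2) ^ N := h2
    _ = Real.exp (-(t ^ 2) / 2 * N) := h3
    _ ≤ δ / 2 := h4
    _ ≤ δ := by linarith

lemma bern_true {p : ℝ} : bernoulliMeasure p {true} = ENNReal.ofReal p := by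
  simp [bernoulliMeasure, Measure.dirac_apply]

lemma bern_false {p : ℝ} : bernoulliMeasure p {false} = ENNReal.ofReal (1 - p) := by
  simp [bernoulliMeasure, Measure.dirac_apply]

lemma bern_univ {p : ℝ} (hp0 : 0 ≤ p) (hp1 : p ≤ 1) :
    bernoulliMeasure p Set.univ = 1 := by
  simp only [bernoulliMeasure, Measure.add_apply, Measure.smul_apply, smul_eq_mul,
    measure_univ, mul_one]
  rw [← ENNReal.ofReal_add hp0 (by linarith), add_sub_cancel, ENNReal.ofReal_one]

set_option maxHeartbeats 1000000 in
lemma lint_eq (q t : ℝ) (hq0 : 0 ≤ q) (hq1 : q ≤ 1) (N : ℕ) :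
    (∫⁻ ω : Fin N → Bool, ENNReal.ofReal (Real.exp
        (-t * ((Finset.univ.filter fun i => ω i = true).card : ℝ)))
      ∂(Measure.pi fun _ => bernoulliMeasure q))
    = ENNReal.ofReal (q * Real.exp (-t) + (1 - q)) ^ N := by
  rw [lintegral_fintype]
  have hterm : ∀ ω : Fin N → Bool,
      ENNReal.ofReal (Real.exp (-t * ((Finset.univ.filter fun i => ω i = true).card : ℝ)))
        * (Measure.pi fun _ => bernoulliMeasure q) {ω}
      = ∏ i : Fin N, (ENNReal.ofReal (Real.exp (-t * (if ω i = true then (1:ℝ) else 0)))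
          * bernoulliMeasure q {ω i}) := by
    intro ω
    have hcard : ((Finset.univ.filter fun i => ω i = true).card : ℝ)
        = ∑ i : Fin N, (if ω i = true then (1:ℝ) else 0) := by
      rw [Finset.card_filter]
      push_cast
      exact Finset.sum_congr rfl fun i _ => by split <;> simp
    have hsing : (Measure.pi fun _ : Fin N => bernoulliMeasure q) {ω}
        = ∏ i, bernoulliMeasure q {ω i} := by
      rw [← Set.univ_pi_singleton, Measure.pi_pi]
    have hexp : ENNReal.ofReal (Real.exp
          (-t * ((Finset.univ.filter fun i => ω i = true).card : ℝ)))
        = ∏ i : Fin N, ENNReal.ofReal (Real.exp (-t * (if ω i = true then (1:ℝ) else 0))) := by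
      rw [← ENNReal.ofReal_prod_of_nonneg (fun i _ => (Real.exp_pos _).le), ← Real.exp_sum,
        ← Finset.mul_sum, hcard]
    rw [hexp, hsing, Finset.prod_mul_distrib]
  simp_rw [hterm]
  have hps := Finset.prod_univ_sum (fun _ : Fin N => (Finset.univ : Finset Bool))
    (fun _ b => ENNReal.ofReal (Real.exp (-t * (if b = true then (1:ℝ) else 0)))
        * bernoulliMeasure q {b})
  rw [Fintype.piFinset_univ] at hps
  rw [← hps]
  have hb : ∑ b : Bool,
      ENNReal.ofReal (Real.exp (-t * (if b = true then (1:ℝ) else 0))) * bernoulliMeasure q {b}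
      = ENNReal.ofReal (q * Real.exp (-t) + (1 - q)) := by
    have e1 : (-t * if true = true then (1:ℝ) else 0) = -t := by simp
    have e2 : (-t * if false = true then (1:ℝ) else 0) = 0 := by simp
    rw [Fintype.sum_bool, e1, e2, bern_true, bern_false, Real.exp_zero, ENNReal.ofReal_one,
      one_mul, ← ENNReal.ofReal_mul (Real.exp_pos _).le,
      ← ENNReal.ofReal_add (by positivity) (by linarith : (0:ℝ) ≤ 1 - q)]
    congr 1
    ring
  simp_rw [hb]
  rw [Finset.prod_const, Finset.card_univ, Fintype.card_fin]

set_option maxHeartbeats 1000000 in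
lemma measure_part (q : ℝ) (hq0 : 0 ≤ q) (hq1 : q ≤ 1) (t : ℝ) (ht0 : 0 < t)
    (N : ℕ) (hNpos : 0 < (N : ℝ)) (δ : ℝ) (hδ0 : 0 < δ) (thr : ℝ)
    (hfinal : (q * Real.exp (-t) + (1 - q)) ^ N * Real.exp (t * thr * N) ≤ δ) :
    (Measure.pi fun _ : Fin N => bernoulliMeasure q)
        {ω | ((Finset.univ.filter fun i => ω i = true).card : ℝ) / N ≥ thr}
      ≥ ENNReal.ofReal (1 - δ) := by
  have hA0 : 0 ≤ q * Real.exp (-t) + (1 - q) :=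
    add_nonneg (mul_nonneg hq0 (Real.exp_pos _).le) (by linarith)
  set μ := Measure.pi fun _ : Fin N => bernoulliMeasure q with hμ
  set S := {ω : Fin N → Bool |
    ((Finset.univ.filter fun i => ω i = true).card : ℝ) / N ≥ thr} with hS
  set f : (Fin N → Bool) → ℝ≥0∞ := fun ω =>
    ENNReal.ofReal (Real.exp (-t * ((Finset.univ.filter fun i => ω i = true).card : ℝ)))
    with hf
  set c : ℝ≥0∞ := ENNReal.ofReal (Real.exp (-t * (thr * N))) with hc
  have hintegral : ∫⁻ ω, f ω ∂μ = ENNReal.ofReal (q * Real.exp (-t) + (1 - q)) ^ N :=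
    lint_eq q t hq0 hq1 N
  have hmarkov := mul_meas_ge_le_lintegral₀ (μ := μ) (measurable_of_countable f).aemeasurable c
  have hsub : Sᶜ ⊆ {ω | c ≤ f ω} := by
    intro ω hω
    simp only [hS, Set.mem_compl_iff, Set.mem_setOf_eq, not_le, ge_iff_le] at hω
    have hlt : ((Finset.univ.filter fun i => ω i = true).card : ℝ) < thr * N :=
      (div_lt_iff₀ hNpos).mp hω
    exact ENNReal.ofReal_le_ofReal (Real.exp_le_exp.2 (by nlinarith))
  have hc0 : c ≠ 0 := (ENNReal.ofReal_pos.2 (Real.exp_pos _)).ne'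
  have hcT : c ≠ ⊤ := ENNReal.ofReal_ne_top
  have hbad : μ Sᶜ ≤ ENNReal.ofReal δ := by
    calc μ Sᶜ ≤ μ {ω | c ≤ f ω} := measure_mono hsub
      _ ≤ (∫⁻ ω, f ω ∂μ) / c := by
          rw [ENNReal.le_div_iff_mul_le (Or.inl hc0) (Or.inl hcT), mul_comm]
          exact hmarkov
      _ = ENNReal.ofReal ((q * Real.exp (-t) + (1 - q)) ^ N / Real.exp (-t * (thr * N))) := by
          rw [hintegral, hc, ← ENNReal.ofReal_pow hA0, ENNReal.ofReal_div_of_pos (Real.exp_pos _)]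
      _ ≤ ENNReal.ofReal δ := by
          apply ENNReal.ofReal_le_ofReal
          have hee : Real.exp (-t * (thr * N)) = (Real.exp (t * thr * N))⁻¹ := by
            rw [← Real.exp_neg]; ring_nf
          rw [hee, div_eq_mul_inv, inv_inv]
          exact hfinal
  have huniv : μ Set.univ = 1 := by
    rw [hμ, Measure.pi_univ]
    simp only [bern_univ hq0 hq1, Finset.prod_const_one]
  have h1 : (1 : ℝ≥0∞) ≤ μ S + μ Sᶜ := by
    rw [← huniv, ← Set.union_compl_self S]
    exact measure_union_le _ _
  have h2 : ENNReal.ofReal (1 - δ) = 1 - ENNReal.ofReal δ := by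
    rw [ENNReal.ofReal_sub _ hδ0.le, ENNReal.ofReal_one]
  rw [ge_iff_le, h2, tsub_le_iff_right]
  calc (1 : ℝ≥0∞) ≤ μ S + μ Sᶜ := h1
    _ ≤ μ S + ENNReal.ofReal δ := add_le_add_right hbad _

/-- Probabilistic core of the completeness of Theorem 4.4: the honest prover,
who forwards the state purifying `D` with `d_H(D, D_C) ≤ η`, passes the
verifier's acceptance test (empirical mean of the Bernoulli swap-test outcomes
at least `1 − 2η²`) with probability at least `1 − δ`, provided
`N ≥ (2/η⁴)·log(2/δ)`. -/
theorem completeness_probabilistic_core {α : Type*} [Fintype α]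
    (D DC : α → ℝ)
    (hD0 : ∀ x, 0 ≤ D x) (hDC0 : ∀ x, 0 ≤ DC x)
    (hD1 : ∑ x, D x = 1) (hDC1 : ∑ x, DC x = 1)
    (η : ℝ) (hη : η ∈ Set.Ioc (0 : ℝ) 1) (hclose : hellingerDist D DC ≤ η)
    (δ : ℝ) (hδ : δ ∈ Set.Ioo (0 : ℝ) 1)
    (q : ℝ) (hq : q = (1 / 2) * (1 + (1 - hellingerDist D DC ^ 2) ^ 2))
    (N : ℕ) (hN : (N : ℝ) ≥ (2 / η ^ 4) * Real.log (2 / δ)) :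
    (Measure.pi fun _ : Fin N => bernoulliMeasure q)
        {ω | ((Finset.univ.filter fun i => ω i = true).card : ℝ) / N ≥
          1 - 2 * η ^ 2} ≥ ENNReal.ofReal (1 - δ) := by
  
  obtain ⟨hη0, hη1⟩ := hη
  obtain ⟨hδ0, hδ1⟩ := hδ
  have hd0 : 0 ≤ hellingerDist D DC := mul_nonneg (by positivity) (Real.sqrt_nonneg _)
  set d := hellingerDist D DC with hdd
  have hdsq : d ^ 2 ≤ η ^ 2 := pow_le_pow_left₀ hd0 hclose 2
  have hη2 : η ^ 2 ≤ 1 := by nlinarith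
  have hd2le : d ^ 2 ≤ 1 := hdsq.trans hη2
  have hq1 : q ≤ 1 := by
    rw [hq]
    nlinarith [mul_nonneg (sq_nonneg d) (by linarith : (0:ℝ) ≤ 2 - d ^ 2)]
  have hqlb : 1 - η ^ 2 + η ^ 4 / 2 ≤ q := by
    rw [hq]
    nlinarith [mul_nonneg (sub_nonneg.2 hdsq) (by nlinarith : (0:ℝ) ≤ 2 - d ^ 2 - η ^ 2)]
  have hq0 : 0 ≤ q := by nlinarith [pow_nonneg hη0.le 4]
  have hNpos : 0 < (N : ℝ) :=
    lt_of_lt_of_le (mul_pos (div_pos two_pos (pow_pos hη0 4))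
      (Real.log_pos (by rw [lt_div_iff₀ hδ0]; linarith))) hN
  have ht0 : (0:ℝ) < η ^ 2 := by positivity
  have hfinal := real_core hη0 hη1 hδ0 hδ1 hq0 hq1 hqlb N hN
  exact measure_part q hq0 hq1 (η ^ 2) ht0 N hNpos δ hδ0 (1 - 2 * η ^ 2) hfinal
end
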